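/- Let φ : A → B be a radical-preserving ring homomorphism such that J(B) is left T-nilpotent. Let M be a non-zero left A-module with projective cover f : P ↠ M. Then B ⊗_A M = 0 iff B ⊗_A P = 0, and B ⊗_A f is a projective cover of B ⊗_A M whenever B ⊗_A M ≠ 0. -/

import Mathlib

universe u

open Function CategoryTheory

/-! ### Ring-theoretic preliminaries -/

/-- The Jacobson radical of a ring (the intersection of all maximal left ideals). -/
def jac (R : Type u) [Ring R] : Ideal R := Ideal.jacobson (⊥ : Ideal R)

section Modules

variable (R : Type u) [Ring R] (M : Type u) [AddCommGroup M] [Module R M]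

/-- A submodule `N` of `M` is superfluous (small) if `N ⊔ L = M` implies `L = M`. -/
def Superfluous (N : Submodule R M) : Prop :=
  ∀ L : Submodule R M, N ⊔ L = ⊤ → L = ⊤

/-- The submodule `I • p` generated by the products of elements of a left ideal `I`
with elements of a submodule `p`. -/
def idealSMul (I : Ideal R) (p : Submodule R M) : Submodule R M :=
  Submodule.span R {x | ∃ a ∈ I, ∃ m ∈ p, x = a • m}

/-- The powers `J(R)^n • M` of the radical acting on a module. -/
def radPow : ℕ → Submodule R M
  | 0 => ⊤
  | n + 1 => idealSMul R M (jac R) (radPow n)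

/-- The Loewy length of a module: the least `n` with `J(R)^n M = 0` (`⊤` if none exists). -/
noncomputable def loewyLength : ℕ∞ :=
  sInf ((↑) '' {n : ℕ | radPow R M n = ⊥})

/-- A projective cover: a linear surjection from a projective module with superfluous kernel. -/
def IsProjectiveCover {P : Type u} [AddCommGroup P] [Module R P]
    (f : P →ₗ[R] M) : Prop :=
  Module.Projective R P ∧ Function.Surjective f ∧ Superfluous R P (LinearMap.ker f)

/-- A module is indecomposable if it is non-zero and admits no non-trivial
direct sum decomposition. -/
def IsIndecomposableModule : Prop :=
  Nontrivial M ∧ ∀ N₁ N₂ : Submodule R M, IsCompl N₁ N₂ → N₁ = ⊥ ∨ N₂ = ⊥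

/-- A submodule is indecomposable if it is non-zero and is not the direct sum of two
non-zero submodules. -/
def IsIndecomposableSubmodule (N : Submodule R M) : Prop :=
  N ≠ ⊥ ∧ ∀ N₁ N₂ : Submodule R M, N₁ ≤ N → N₂ ≤ N → N₁ ⊓ N₂ = ⊥ → N₁ ⊔ N₂ = N →
    N₁ = ⊥ ∨ N₂ = ⊥

end Modules

section Rings

variable (R : Type u) [Ring R]

/-- A ring is semilocal if it is semisimple modulo its Jacobson radical. -/
def IsSemilocalRing : Prop :=
  IsSemisimpleModule R (R ⧸ jac R)

/-- A ring is semiperfect if it is semilocal and idempotents lift modulo the radical. -/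
def IsSemiperfectRing : Prop :=
  IsSemilocalRing R ∧
    ∀ x : R, x * x - x ∈ jac R → ∃ e : R, IsIdempotentElem e ∧ e - x ∈ jac R

/-- A subset `T` of a ring is left T-nilpotent if every sequence in `T` has a
vanishing initial product `a 0 * a 1 * ⋯ * a n`. -/
def IsLeftTNilpotent {R : Type u} [Ring R] (T : Set R) : Prop :=
  ∀ a : ℕ → R, (∀ i, a i ∈ T) → ∃ n : ℕ, ((List.range (n + 1)).map a).prod = 0

/-- A ring is left perfect if it is semilocal with left T-nilpotent radical. -/
def IsLeftPerfectRing : Prop :=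
  IsSemilocalRing R ∧ IsLeftTNilpotent (jac R : Set R)

/-- `I ^ n = 0`: every product of `n` elements of `I` vanishes. -/
def IdealPowZero (I : Ideal R) (n : ℕ) : Prop :=
  ∀ a : ℕ → R, (∀ i, a i ∈ I) → ((List.range n).map a).prod = 0

/-- A ring is semiprimary if it is semilocal and its Jacobson radical is nilpotent. -/
def IsSemiprimaryRing' : Prop :=
  IsSemilocalRing R ∧ ∃ n : ℕ, IdealPowZero R (jac R) n

/-- A primitive idempotent: a non-zero idempotent admitting no non-trivial
decomposition into orthogonal idempotents. -/
def IsPrimitiveIdem (e : R) : Prop :=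
  IsIdempotentElem e ∧ e ≠ 0 ∧
    ∀ f g : R, IsIdempotentElem f → IsIdempotentElem g → f * g = 0 → g * f = 0 →
      f + g = e → f = 0 ∨ g = 0

/-- A complete set of primitive orthogonal idempotents. -/
def IsCompleteOrthogonalPrimitiveSet {ι : Type u} [Fintype ι] (e : ι → R) : Prop :=
  (∀ i, IsPrimitiveIdem R (e i)) ∧ (∀ i j, i ≠ j → e i * e j = 0) ∧ ∑ i, e i = 1

/-- A complete set of primitive orthogonal idempotents is basic if the corresponding
indecomposable projective modules `R e i` are pairwise non-isomorphic. -/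
def IsBasicSet {ι : Type u} [Fintype ι] (e : ι → R) : Prop :=
  IsCompleteOrthogonalPrimitiveSet R e ∧
    ∀ i j, Nonempty ((Ideal.span {e i}) ≃ₗ[R] (Ideal.span {e j})) → i = j

/-- A ring is basic if it admits a complete set of primitive orthogonal idempotents
that is basic. -/
def IsBasicRing : Prop :=
  ∃ (ι : Type u) (_ : Fintype ι) (e : ι → R), IsBasicSet R e

end Rings

/-! ### Homological dimensions -/

section Dim

variable (A : Type u) [Ring A]

/-- `projDimLE A n M`: the `A`-module `M` admits a projective resolution of length `≤ n`. -/
def projDimLE : ℕ → ModuleCat.{u} A → Prop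
  | 0, M => Projective M
  | n + 1, M => ∃ (K P : ModuleCat.{u} A) (f : K ⟶ P) (g : P ⟶ M),
      Projective P ∧ Function.Injective f ∧ Function.Surjective g ∧
      (∀ x, g (f x) = 0) ∧ (∀ y, g y = 0 → ∃ x, f x = y) ∧ projDimLE n K

/-- The projective dimension of a module, as an extended natural number. -/
noncomputable def projDim (M : ModuleCat.{u} A) : ℕ∞ :=
  sInf ((↑) '' {n : ℕ | projDimLE A n M})

/-- `injDimLE A n M`: the `A`-module `M` admits an injective coresolution of length `≤ n`. -/
def injDimLE : ℕ → ModuleCat.{u} A → Prop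
  | 0, M => Injective M
  | n + 1, M => ∃ (I C : ModuleCat.{u} A) (f : M ⟶ I) (g : I ⟶ C),
      Injective I ∧ Function.Injective f ∧ Function.Surjective g ∧
      (∀ x, g (f x) = 0) ∧ (∀ y, g y = 0 → ∃ x, f x = y) ∧ injDimLE n C

/-- The injective dimension of a module, as an extended natural number. -/
noncomputable def injDim (M : ModuleCat.{u} A) : ℕ∞ :=
  sInf ((↑) '' {n : ℕ | injDimLE A n M})

/-- The left global dimension of a ring. -/
noncomputable def glDim : ℕ∞ :=
  ⨆ M : ModuleCat.{u} A, projDim A M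

/-- The little finitistic dimension: the supremum of the projective dimensions of
finitely generated left modules of finite projective dimension. -/
noncomputable def finDim : ℕ∞ :=
  ⨆ (M : ModuleCat.{u} A) (_ : Module.Finite A M ∧ projDim A M ≠ ⊤), projDim A M

/-- The big finitistic dimension: the supremum of the projective dimensions of
all left modules of finite projective dimension. -/
noncomputable def FinDim : ℕ∞ :=
  ⨆ (M : ModuleCat.{u} A) (_ : projDim A M ≠ ⊤), projDim A M

end Dim

/-! ### Induction along a ring homomorphism -/

section Tensor

variable {A B : Type u} [Ring A] [Ring B] (φ : A →+* B)

/-- The relations defining `B ⊗_A M` inside `B ⊗_ℤ M`. -/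
def TensorRel (M : Type u) [AddCommGroup M] [Module A M] :
    Submodule B (TensorProduct ℤ B M) :=
  Submodule.span B
    {x | ∃ (b : B) (a : A) (m : M), x = (b * φ a) ⊗ₜ[ℤ] m - b ⊗ₜ[ℤ] (a • m)}

/-- The induced module `B ⊗_A M` along a ring homomorphism `φ : A →+* B`, realized
as the quotient of `B ⊗_ℤ M` by the bilinearity relations for the `A`-actions. -/
def TensorB (M : Type u) [AddCommGroup M] [Module A M] : Type u :=
  TensorProduct ℤ B M ⧸ TensorRel φ M

noncomputable instance (M : Type u) [AddCommGroup M] [Module A M] :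
    AddCommGroup (TensorB φ M) :=
  inferInstanceAs (AddCommGroup (TensorProduct ℤ B M ⧸ TensorRel φ M))

noncomputable instance (M : Type u) [AddCommGroup M] [Module A M] :
    Module B (TensorB φ M) :=
  inferInstanceAs (Module B (TensorProduct ℤ B M ⧸ TensorRel φ M))

/-- The map induced on `B ⊗_ℤ ·` by an `A`-linear map `f`. -/
noncomputable def tmapAux {M N : Type u} [AddCommGroup M] [Module A M]
    [AddCommGroup N] [Module A N] (f : M →ₗ[A] N) :
    TensorProduct ℤ B M →ₗ[B] TensorProduct ℤ B N :=
  TensorProduct.AlgebraTensorModule.map (LinearMap.id : B →ₗ[B] B)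
    f.toAddMonoidHom.toIntLinearMap

/-- The induction functor on morphisms: `B ⊗_A f : B ⊗_A M →ₗ[B] B ⊗_A N`. -/
noncomputable def tmap {M N : Type u} [AddCommGroup M] [Module A M]
    [AddCommGroup N] [Module A N] (f : M →ₗ[A] N) :
    TensorB φ M →ₗ[B] TensorB φ N :=
  Submodule.mapQ (TensorRel φ M) (TensorRel φ N) (tmapAux (B := B) f) (by
    rw [TensorRel, Submodule.span_le]
    rintro x ⟨b, a, m, rfl⟩
    have : (tmapAux (B := B) f) ((b * φ a) ⊗ₜ[ℤ] m - b ⊗ₜ[ℤ] (a • m)) =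
        (b * φ a) ⊗ₜ[ℤ] (f m) - b ⊗ₜ[ℤ] (a • f m) := by
      simp [tmapAux, map_smul]
    rw [SetLike.mem_coe, Submodule.mem_comap, this]
    exact Submodule.subset_span ⟨b, a, f m, rfl⟩)

/-- `torVanish φ n M` encodes the vanishing `Tor_{n+1}^A(B, M) = 0`, via dimension
shifting through short exact sequences `0 → K → P → M → 0` with `P` projective. -/
def torVanish : ℕ → ModuleCat.{u} A → Prop
  | 0, M => ∀ (K P : ModuleCat.{u} A) (f : K ⟶ P) (g : P ⟶ M),
      Projective P → Function.Injective f → Function.Surjective g →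
      (∀ x, g (f x) = 0) → (∀ y, g y = 0 → ∃ x, f x = y) →
      Function.Injective (tmap φ f.hom)
  | n + 1, M => ∀ (K P : ModuleCat.{u} A) (f : K ⟶ P) (g : P ⟶ M),
      Projective P → Function.Injective f → Function.Surjective g →
      (∀ x, g (f x) = 0) → (∀ y, g y = 0 → ∃ x, f x = y) →
      torVanish n K

/-- The flat dimension of `B` as a right `A`-module along `φ`, characterized by Tor
vanishing: `flatdim B_A ≤ d` iff `Tor_n^A(B, M) = 0` for all `n > d` and all left
`A`-modules `M`. -/
noncomputable def flatDimR : ℕ∞ :=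
  sInf ((↑) '' {d : ℕ | ∀ (M : ModuleCat.{u} A) (n : ℕ), d ≤ n → torVanish φ n M})

/-- `B` as a right `A`-module (i.e. a left `Aᵐᵒᵖ`-module) via `φ`. -/
noncomputable def rightModule : Module Aᵐᵒᵖ B :=
  Module.compHom B (RingHom.op φ)

/-- The projective dimension of `B` as a right `A`-module via `φ`. -/
noncomputable def pdBA : ℕ∞ :=
  letI := rightModule φ
  projDim Aᵐᵒᵖ (ModuleCat.of Aᵐᵒᵖ B)

end Tensor


/-! ### Auxiliary machinery for Statement 7 -/

namespace Statement7Aux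

variable {B : Type u} [Ring B]

theorem list_rep {N : Type u} [AddCommGroup N] [Module B N] (J : Ideal B)
    {n : N} (h : n ∈ Submodule.span B {x | ∃ j ∈ J, ∃ m : N, x = j • m}) :
    ∃ l : List (B × N), (∀ x ∈ l, x.1 ∈ J) ∧ n = (l.map fun x => x.1 • x.2).sum := by
  induction h using Submodule.span_induction with
  | mem x hx =>
      obtain ⟨j, hj, m, rfl⟩ := hx
      exact ⟨[(j, m)], by simpa using hj, by simp⟩
  | zero => exact ⟨[], by simp, by simp⟩
  | add x y hx hy ihx ihy =>
      obtain ⟨l₁, h₁, rfl⟩ := ihx; obtain ⟨l₂, h₂, rfl⟩ := ihy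
      refine ⟨l₁ ++ l₂, ?_, by simp⟩
      intro x hx
      rcases List.mem_append.mp hx with h | h
      · exact h₁ x h
      · exact h₂ x h
  | smul a x hx ih =>
      obtain ⟨l, hl, rfl⟩ := ih
      refine ⟨l.map fun y => (a * y.1, y.2), ?_, ?_⟩
      · intro x hx
        obtain ⟨y, hy, rfl⟩ := List.mem_map.mp hx
        exact Ideal.mul_mem_left _ _ (hl y hy)
      · rw [List.smul_sum, List.map_map, List.map_map]
        congr 1
        apply List.map_congr_left
        intro y _
        simp [Function.comp, mul_smul]

theorem bass {N : Type u} [AddCommGroup N] [Module B N] (J : Ideal B)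
    (hTn : IsLeftTNilpotent (J : Set B))
    (h : ∀ n : N, n ∈ Submodule.span B {x | ∃ j ∈ J, ∃ m : N, x = j • m}) :
    ∀ n : N, n = 0 := by
  by_contra hc
  push_neg at hc
  obtain ⟨n, hn⟩ := hc
  have step : ∀ (b : B) (m : N), b • m ≠ 0 →
      ∃ j : B, j ∈ J ∧ ∃ m' : N, (b * j) • m' ≠ 0 := by
    intro b m hbm
    obtain ⟨l, hl, hrep⟩ := list_rep J (h m)
    rw [hrep, List.smul_sum, List.map_map] at hbm
    have hex : ∃ x ∈ l, ((b • ·) ∘ fun x : B × N => x.1 • x.2) x ≠ 0 := by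
      by_contra hz
      push_neg at hz
      refine hbm (List.sum_eq_zero ?_)
      intro y hy
      obtain ⟨x, hx, rfl⟩ := List.mem_map.mp hy
      exact hz x hx
    obtain ⟨x, hx, hne⟩ := hex
    exact ⟨x.1, hl x hx, x.2, by simpa [Function.comp, smul_smul] using hne⟩
  have key : ∀ x : {p : B × N // p.1 • p.2 ≠ 0},
      ∃ y : B × {p : B × N // p.1 • p.2 ≠ 0}, y.1 ∈ J ∧ y.2.1.1 = x.1.1 * y.1 := by
    rintro ⟨⟨b, m⟩, hx⟩
    obtain ⟨j, hj, m', hm'⟩ := step b m hx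
    exact ⟨⟨j, ⟨(b * j, m'), hm'⟩⟩, hj, rfl⟩
  choose nxt h1 h2 using key
  have hstart : ((1 : B), n).1 • ((1 : B), n).2 ≠ 0 := by simpa using hn
  let t : ℕ → B × {p : B × N // p.1 • p.2 ≠ 0} :=
    fun k => Nat.rec (nxt ⟨(1, n), hstart⟩) (fun _ ih => nxt ih.2) k
  have ht : ∀ k, t (k + 1) = nxt (t k).2 := fun k => rfl
  have ht0 : t 0 = nxt ⟨(1, n), hstart⟩ := rfl
  set a : ℕ → B := fun k => (t k).1 with ha_def
  have ha : ∀ k, a k ∈ J := by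
    intro k
    cases k with
    | zero => show (t 0).1 ∈ J; rw [ht0]; exact h1 _
    | succ k => show (t (k + 1)).1 ∈ J; rw [ht k]; exact h1 _
  have hprod : ∀ k, (t k).2.1.1 = ((List.range (k + 1)).map a).prod := by
    intro k
    induction k with
    | zero =>
        have h2' := h2 ⟨(1, n), hstart⟩
        rw [← ht0] at h2'
        simp only [one_mul] at h2'
        rw [h2']
        show a 0 = _
        simp [List.range_succ]
    | succ k ih =>
        have h2' := h2 (t k).2
        rw [← ht k] at h2'
        have harange : a (k + 1) = (t (k + 1)).1 := rfl
        rw [List.range_succ, List.map_append, List.prod_append]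
        rw [h2', ih]
        simp [harange]
  obtain ⟨k, hk⟩ := hTn a ha
  exact (t k).2.2 (by rw [hprod k, hk, zero_smul])

theorem superfluous_of_le {Q : Type u} [AddCommGroup Q] [Module B Q]
    {S T : Submodule B Q} (hST : S ≤ T) (hT : Superfluous B Q T) :
    Superfluous B Q S := fun L hL =>
  hT L (eq_top_iff.mpr (hL ▸ sup_le_sup_right hST L))

theorem bass_superfluous {Q : Type u} [AddCommGroup Q] [Module B Q] (J : Ideal B)
    (hTn : IsLeftTNilpotent (J : Set B)) :
    Superfluous B Q (Submodule.span B {x | ∃ j ∈ J, ∃ q : Q, x = j • q}) := by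
  intro L hL
  have hz : ∀ nn : Q ⧸ L, nn = 0 := by
    apply bass J hTn
    intro nn
    obtain ⟨q, rfl⟩ := L.mkQ_surjective nn
    have hq : q ∈ Submodule.span B {x | ∃ j ∈ J, ∃ q : Q, x = j • q} ⊔ L := by
      rw [hL]; trivial
    obtain ⟨x, hx, l, hlm, rfl⟩ := Submodule.mem_sup.mp hq
    have hl0 : L.mkQ l = 0 := by
      simpa [Submodule.mkQ_apply] using (Submodule.Quotient.mk_eq_zero L).mpr hlm
    rw [map_add, hl0, add_zero]
    have : L.mkQ x ∈ Submodule.map L.mkQ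
        (Submodule.span B {x | ∃ j ∈ J, ∃ q : Q, x = j • q}) :=
      Submodule.mem_map_of_mem hx
    rw [Submodule.map_span] at this
    refine Submodule.span_mono ?_ this
    rintro y ⟨z, ⟨j, hj, q', rfl⟩, rfl⟩
    exact ⟨j, hj, L.mkQ q', by simp⟩
  rw [eq_top_iff]
  intro q _
  have := hz (L.mkQ q)
  rwa [Submodule.mkQ_apply, Submodule.Quotient.mk_eq_zero] at this

/-! ### Radical of a projective module -/

theorem comap_coatom {A : Type u} [Ring A] {P : Type u} [AddCommGroup P] [Module A P]
    (g : P →ₗ[A] A) (I : Ideal A) (hI : I.IsMaximal) :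
    Submodule.comap g I = ⊤ ∨ IsCoatom (Submodule.comap g I) := by
  by_cases h : Submodule.comap g I = ⊤
  · exact Or.inl h
  right
  refine ⟨h, fun N hN => ?_⟩
  obtain ⟨nn, hnN, hng⟩ : ∃ nn, nn ∈ N ∧ g nn ∉ I := by
    by_contra hc
    push_neg at hc
    exact hN.ne' (le_antisymm (fun x hx => hc x hx) hN.le)
  have hlt : I < I ⊔ Ideal.span {g nn} :=
    lt_of_le_of_ne le_sup_left (fun hEq => hng (by
      rw [hEq]; exact Submodule.mem_sup_right (Submodule.mem_span_singleton_self _)))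
  have htop : I ⊔ Ideal.span {g nn} = ⊤ := (Ideal.isMaximal_def.mp hI).2 _ hlt
  rw [eq_top_iff]
  intro p _
  have hp : g p ∈ I ⊔ Ideal.span {g nn} := by rw [htop]; trivial
  obtain ⟨i, hi, c, hc, hsum⟩ := Submodule.mem_sup.mp hp
  obtain ⟨r, rfl⟩ := Ideal.mem_span_singleton'.mp hc
  have hpm : p - r • nn ∈ Submodule.comap g I := by
    rw [Submodule.mem_comap, map_sub, map_smul, ← hsum]
    simpa using hi
  have hmem := N.add_mem (hN.le hpm) (N.smul_mem r hnN)
  simpa using hmem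

theorem mem_jac_smul_of_coatoms {A P : Type u} [Ring A] [AddCommGroup P] [Module A P]
    (hP : Module.Projective A P) {k : P} (hk : ∀ m : Submodule A P, IsCoatom m → k ∈ m) :
    k ∈ Submodule.span A {x | ∃ a ∈ jac A, ∃ p : P, x = a • p} := by
  obtain ⟨s, hs⟩ := Module.projective_def.mp hP
  have hcoef : ∀ p' : P, s k p' ∈ jac A := by
    intro p'
    rw [jac, Ideal.jacobson]
    rw [Submodule.mem_sInf]
    rintro I ⟨-, hI⟩
    have hk' : k ∈ Submodule.comap ((Finsupp.lapply p') ∘ₗ s) I := by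
      rcases comap_coatom ((Finsupp.lapply p') ∘ₗ s) I hI with h | h
      · rw [h]; trivial
      · exact hk _ h
    simpa using hk'
  rw [← hs k, Finsupp.linearCombination_apply, Finsupp.sum]
  apply Submodule.sum_mem
  intro p' _
  exact Submodule.subset_span ⟨s k p', hcoef p', p', rfl⟩

variable {A : Type u} [Ring A] (φ : A →+* B)

/-- The quotient map onto `TensorB`. -/
noncomputable def tbmk {X : Type u} [AddCommGroup X] [Module A X] :
    TensorProduct ℤ B X →ₗ[B] TensorB φ X := (TensorRel φ X).mkQ

theorem tbmk_surjective {X : Type u} [AddCommGroup X] [Module A X] :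
    Function.Surjective (tbmk φ (X := X)) := Submodule.mkQ_surjective _

theorem tbmk_rel {X : Type u} [AddCommGroup X] [Module A X] (b : B) (a : A) (x : X) :
    tbmk φ ((b * φ a) ⊗ₜ[ℤ] x) = tbmk φ (b ⊗ₜ[ℤ] (a • x)) := by
  exact (Submodule.Quotient.eq _).mpr (Submodule.subset_span ⟨b, a, x, rfl⟩)

theorem tbmk_smul {X : Type u} [AddCommGroup X] [Module A X] (b c : B) (x : X) :
    b • tbmk φ (c ⊗ₜ[ℤ] x) = tbmk φ ((b * c) ⊗ₜ[ℤ] x) := by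
  rw [← map_smul, TensorProduct.smul_tmul', smul_eq_mul]

theorem tb_induction {X : Type u} [AddCommGroup X] [Module A X]
    {p : TensorB φ X → Prop} (zero : p 0)
    (tmul : ∀ (b : B) (x : X), p (tbmk φ (b ⊗ₜ[ℤ] x)))
    (add : ∀ y z, p y → p z → p (y + z)) : ∀ y, p y := by
  intro y
  obtain ⟨t, rfl⟩ := tbmk_surjective φ y
  induction t using TensorProduct.induction_on with
  | zero => rw [map_zero]; exact zero
  | tmul b x => exact tmul b x
  | add t₁ t₂ h₁ h₂ => rw [map_add]; exact add _ _ h₁ h₂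

/-- Lift a `φ`-semilinear additive map to a `B`-linear map on `TensorB`. -/
noncomputable def liftTB {X N : Type u} [AddCommGroup X] [Module A X]
    [AddCommGroup N] [Module B N] (g : X →+ N)
    (hg : ∀ (a : A) (x : X), g (a • x) = φ a • g x) :
    TensorB φ X →ₗ[B] N :=
  Submodule.liftQ (TensorRel φ X)
    (TensorProduct.AlgebraTensorModule.lift
      { toFun := fun b => b • g.toIntLinearMap
        map_add' := fun b b' => by ext x; simp [add_smul]
        map_smul' := fun c b => by ext x; simp [mul_smul] })
    (by rw [TensorRel, Submodule.span_le]
        rintro x ⟨b, a, m, rfl⟩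
        simp only [SetLike.mem_coe, LinearMap.mem_ker, map_sub]
        rw [TensorProduct.AlgebraTensorModule.lift_tmul,
          TensorProduct.AlgebraTensorModule.lift_tmul]
        simp [hg, mul_smul])

@[simp] theorem liftTB_mk {X N : Type u} [AddCommGroup X] [Module A X]
    [AddCommGroup N] [Module B N] (g : X →+ N)
    (hg : ∀ (a : A) (x : X), g (a • x) = φ a • g x) (b : B) (x : X) :
    liftTB φ g hg (tbmk φ (b ⊗ₜ[ℤ] x)) = b • g x := by
  show (TensorProduct.AlgebraTensorModule.lift
      { toFun := fun b => b • g.toIntLinearMap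
        map_add' := fun b b' => by ext x; simp [add_smul]
        map_smul' := fun c b => by ext x; simp [mul_smul] } :
      TensorProduct ℤ B X →ₗ[B] N) (b ⊗ₜ[ℤ] x) = b • g x
  rw [TensorProduct.AlgebraTensorModule.lift_tmul]
  rfl

theorem tmap_mk {X Y : Type u} [AddCommGroup X] [Module A X] [AddCommGroup Y] [Module A Y]
    (f : X →ₗ[A] Y) (b : B) (x : X) :
    tmap φ f (tbmk φ (b ⊗ₜ[ℤ] x)) = tbmk φ (b ⊗ₜ[ℤ] f x) := by
  show tbmk φ (tmapAux (B := B) f (b ⊗ₜ[ℤ] x)) = tbmk φ (b ⊗ₜ[ℤ] f x)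
  rw [tmapAux, TensorProduct.AlgebraTensorModule.map_tmul]
  rfl


/-! ### Projectivity -/

theorem tensorB_projective {P : Type u} [AddCommGroup P] [Module A P]
    (hP : Module.Projective A P) : Module.Projective B (TensorB φ P) := by
  obtain ⟨sA, hsA⟩ := Module.projective_def.mp hP
  -- the semilinear "coefficient" map
  set g1 : (P →₀ A) → (TensorB φ P →₀ B) :=
    fun w => Finsupp.mapDomain (fun p' : P => tbmk φ ((1 : B) ⊗ₜ[ℤ] p'))
      (Finsupp.mapRange (φ : A → B) φ.map_zero w) with hg1
  have hg1add : ∀ w w', g1 (w + w') = g1 w + g1 w' := by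
    intro w w'
    rw [hg1]
    simp only []
    rw [Finsupp.mapRange_add (map_add φ), Finsupp.mapDomain_add]
  have hg1smul : ∀ (a : A) (w : P →₀ A), g1 (a • w) = φ a • g1 w := by
    intro a w
    rw [hg1]
    simp only []
    rw [← Finsupp.mapDomain_smul]
    congr 1
    ext p'
    simp [Finsupp.mapRange_apply, smul_eq_mul, map_mul]
  have hg1total : ∀ w : P →₀ A,
      Finsupp.linearCombination B (id : TensorB φ P → TensorB φ P) (g1 w)
        = tbmk φ ((1 : B) ⊗ₜ[ℤ] (Finsupp.linearCombination A (id : P → P) w)) := by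
    intro w
    induction w using Finsupp.induction_linear with
    | zero => simp [hg1]
    | add w w' hw hw' =>
        rw [hg1add, map_add, hw, hw', map_add]
        rw [← map_add, ← TensorProduct.tmul_add]
    | single p' c =>
        rw [hg1]
        simp only [Finsupp.mapRange_single]
        rw [Finsupp.mapDomain_single, Finsupp.linearCombination_single,
          Finsupp.linearCombination_single]
        rw [id, id, tbmk_smul, mul_one, ← one_mul (φ c), tbmk_rel]
  set g0 : P →+ (TensorB φ P →₀ B) :=
    AddMonoidHom.mk' (fun p => g1 (sA p)) (fun p p' => by
      show g1 (sA (p + p')) = g1 (sA p) + g1 (sA p')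
      rw [map_add sA, hg1add]) with hg0
  have hg0s : ∀ (a : A) (p : P), g0 (a • p) = φ a • g0 p := by
    intro a p
    show g1 (sA (a • p)) = φ a • g1 (sA p)
    rw [map_smul sA, hg1smul]
  set s : TensorB φ P →ₗ[B] (TensorB φ P →₀ B) := liftTB φ g0 hg0s with hs
  refine Module.projective_def.mpr ⟨s, ?_⟩
  intro x
  induction x using tb_induction φ with
  | zero => simp
  | tmul b p =>
      rw [hs, liftTB_mk, map_smul]
      show b • (Finsupp.linearCombination B id) (g1 (sA p)) = _
      rw [hg1total, hsA p, tbmk_smul, mul_one]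
  | add y z hy hz => rw [map_add, map_add, hy, hz]

/-! ### Surjectivity and kernel of `tmap` -/

variable {M P : Type u} [AddCommGroup M] [Module A M] [AddCommGroup P] [Module A P]

theorem tmap_surjective (f : P →ₗ[A] M) (hfs : Function.Surjective f) :
    Function.Surjective (tmap φ f) := by
  intro y
  induction y using tb_induction φ with
  | zero => exact ⟨0, map_zero _⟩
  | tmul b m =>
      obtain ⟨p, rfl⟩ := hfs m
      exact ⟨tbmk φ (b ⊗ₜ[ℤ] p), tmap_mk φ f b p⟩
  | add y z hy hz =>
      obtain ⟨x1, rfl⟩ := hy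
      obtain ⟨x2, rfl⟩ := hz
      exact ⟨x1 + x2, map_add _ _ _⟩

theorem tmap_ker_le (f : P →ₗ[A] M) (hfs : Function.Surjective f) :
    LinearMap.ker (tmap φ f) ≤
      Submodule.span B {y : TensorB φ P | ∃ k ∈ LinearMap.ker f, y = tbmk φ ((1 : B) ⊗ₜ[ℤ] k)} := by
  set K' := Submodule.span B
    {y : TensorB φ P | ∃ k ∈ LinearMap.ker f, y = tbmk φ ((1 : B) ⊗ₜ[ℤ] k)} with hK'
  set sec : M → P := Function.surjInv hfs with hsec_def
  have hsec : ∀ m, f (sec m) = m := fun m => Function.surjInv_eq hfs m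
  have hcong : ∀ (b : B) (x y : P), f x = f y →
      K'.mkQ (tbmk φ (b ⊗ₜ[ℤ] x)) = K'.mkQ (tbmk φ (b ⊗ₜ[ℤ] y)) := by
    intro b x y hxy
    rw [Submodule.mkQ_apply, Submodule.mkQ_apply, Submodule.Quotient.eq]
    have heq : tbmk φ (b ⊗ₜ[ℤ] x) - tbmk φ (b ⊗ₜ[ℤ] y)
        = b • tbmk φ ((1 : B) ⊗ₜ[ℤ] (x - y)) := by
      rw [tbmk_smul, mul_one, TensorProduct.tmul_sub, map_sub]
    rw [heq]
    exact K'.smul_mem b (Submodule.subset_span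
      ⟨x - y, by rw [LinearMap.mem_ker, map_sub, hxy, sub_self], rfl⟩)
  set g : M →+ (TensorB φ P ⧸ K') :=
    AddMonoidHom.mk' (fun m => K'.mkQ (tbmk φ ((1 : B) ⊗ₜ[ℤ] sec m)))
      (fun m m' => by
        show K'.mkQ (tbmk φ ((1 : B) ⊗ₜ[ℤ] sec (m + m')))
          = K'.mkQ (tbmk φ ((1 : B) ⊗ₜ[ℤ] sec m)) + K'.mkQ (tbmk φ ((1 : B) ⊗ₜ[ℤ] sec m'))
        rw [hcong 1 (sec (m + m')) (sec m + sec m') (by rw [hsec, map_add, hsec, hsec])]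
        rw [TensorProduct.tmul_add, map_add, map_add]) with hg
  have hgs : ∀ (a : A) (m : M), g (a • m) = φ a • g m := by
    intro a m
    show K'.mkQ (tbmk φ ((1 : B) ⊗ₜ[ℤ] sec (a • m)))
      = φ a • K'.mkQ (tbmk φ ((1 : B) ⊗ₜ[ℤ] sec m))
    rw [hcong 1 (sec (a • m)) (a • sec m) (by rw [hsec, map_smul, hsec])]
    rw [← tbmk_rel φ 1 a (sec m), one_mul, ← map_smul, tbmk_smul, mul_one]
  set ψ := liftTB φ g hgs with hψdef
  have hψ : ∀ x : TensorB φ P, ψ (tmap φ f x) = K'.mkQ x := by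
    intro x
    induction x using tb_induction φ with
    | zero => rw [map_zero, map_zero, map_zero]
    | tmul b p =>
        rw [tmap_mk, hψdef, liftTB_mk]
        show b • K'.mkQ (tbmk φ ((1 : B) ⊗ₜ[ℤ] sec (f p))) = _
        rw [hcong 1 (sec (f p)) p (hsec _), ← map_smul, tbmk_smul, mul_one]
    | add y z hy hz => rw [map_add, map_add, hy, hz, map_add]
  intro x hx
  have hx0 := hψ x
  rw [LinearMap.mem_ker.mp hx, map_zero] at hx0
  rw [Submodule.mkQ_apply] at hx0
  exact (Submodule.Quotient.mk_eq_zero K').mp hx0.symm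

end Statement7Aux


/-- Induction along a radical-preserving homomorphism with left
T-nilpotent target radical preserves projective covers of arbitrary modules. -/
theorem statement_7 {A B : Type u} [Ring A] [Ring B] (φ : A →+* B)
    (hrad : ∀ a ∈ jac A, φ a ∈ jac B)
    (hTn : IsLeftTNilpotent (jac B : Set B))
    (M P : Type u) [AddCommGroup M] [Module A M] [AddCommGroup P] [Module A P]
    (hM : ∃ m : M, m ≠ 0)
    (f : P →ₗ[A] M) (hf : IsProjectiveCover A M f) :
    ((∀ x : TensorB φ M, x = 0) ↔ (∀ x : TensorB φ P, x = 0)) ∧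
      ((∃ x : TensorB φ M, x ≠ 0) →
        IsProjectiveCover B (TensorB φ M) (tmap φ f)) := by
  classical
  obtain ⟨hproj, hfs, hker_sup⟩ := hf
  -- kernel elements lie in every maximal submodule of `P`
  have hker_coatom : ∀ k ∈ LinearMap.ker f, ∀ m : Submodule A P, IsCoatom m → k ∈ m := by
    intro k hk m hm
    by_cases hle : LinearMap.ker f ≤ m
    · exact hle hk
    · exfalso
      have hlt : m < LinearMap.ker f ⊔ m :=
        lt_of_le_of_ne le_sup_right (fun hEq => hle (by rw [hEq]; exact le_sup_left))
      exact hm.1 (hker_sup m (hm.2 _ hlt))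
  have hkerJ : ∀ k ∈ LinearMap.ker f,
      k ∈ Submodule.span A {x | ∃ a ∈ jac A, ∃ p : P, x = a • p} :=
    fun k hk => Statement7Aux.mem_jac_smul_of_coatoms hproj (hker_coatom k hk)
  set JQ : Submodule B (TensorB φ P) :=
    Submodule.span B {x | ∃ j ∈ jac B, ∃ q : TensorB φ P, x = j • q} with hJQ
  -- generators of the kernel of the induced map land in `J(B)•(B ⊗ P)`
  have hgen : ∀ k ∈ LinearMap.ker f,
      Statement7Aux.tbmk φ ((1 : B) ⊗ₜ[ℤ] k) ∈ JQ := by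
    intro k hk
    have hkspan := hkerJ k hk
    clear hk
    induction hkspan using Submodule.span_induction with
    | mem x hx =>
        obtain ⟨a, ha, p, rfl⟩ := hx
        rw [← Statement7Aux.tbmk_rel φ 1 a p, one_mul, ← mul_one (φ a),
          ← Statement7Aux.tbmk_smul]
        exact Submodule.subset_span ⟨φ a, hrad a ha, _, rfl⟩
    | zero => rw [TensorProduct.tmul_zero, map_zero]; exact JQ.zero_mem
    | add x y hx hy ihx ihy =>
        rw [TensorProduct.tmul_add, map_add]
        exact JQ.add_mem ihx ihy
    | smul a x hx ih =>
        rw [← Statement7Aux.tbmk_rel φ 1 a x, one_mul, ← mul_one (φ a),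
          ← Statement7Aux.tbmk_smul]
        exact JQ.smul_mem _ ih
  have hkle : LinearMap.ker (tmap φ f) ≤ JQ := by
    refine (Statement7Aux.tmap_ker_le φ f hfs).trans ?_
    rw [Submodule.span_le]
    rintro y ⟨k, hk, rfl⟩
    exact hgen k hk
  have hsurj : Function.Surjective (tmap φ f) := Statement7Aux.tmap_surjective φ f hfs
  constructor
  · constructor
    · intro h0M x
      have hall : ∀ q : TensorB φ P, q ∈ JQ :=
        fun q => hkle (LinearMap.mem_ker.mpr (h0M _))
      exact Statement7Aux.bass (jac B) hTn hall x
    · intro h0P y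
      obtain ⟨x, rfl⟩ := hsurj y
      rw [h0P x, map_zero]
  · intro _
    exact ⟨Statement7Aux.tensorB_projective φ hproj, hsurj,
      Statement7Aux.superfluous_of_le hkle (Statement7Aux.bass_superfluous (jac B) hTn)⟩
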